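/- Sufficient condition via cumulative subspace coherence for P'_{ℓq/ℓ1} (Proposition 4): if ζ_k + ζ_{k−1} < (1−ε'_q)/(1+ε'_q), then for every k-subset Λ_k and every nonzero x ∈ (⊕_{i∈Λ_k}S_i) ∩ (⊕_{i∉Λ_k}S_i), the minimum of Σ_{i∈Λ_k}‖B[i]c[i]‖_q over representations of x using blocks in Λ_k is strictly less than the minimum of Σ_{i∉Λ_k}‖B[i]c[i]‖_q over representations using blocks outside Λ_k. -/

import Mathlib

open scoped BigOperators

/-- The subspace coherence of two subspaces of `R^D`. -/
noncomputable def subCoh {D : ℕ} (S T : Submodule ℝ (EuclideanSpace ℝ (Fin D))) : ℝ :=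
  sSup {r : ℝ | ∃ x ∈ S, ∃ z ∈ T, x ≠ 0 ∧ z ≠ 0 ∧ r = |(inner ℝ x z : ℝ)| / (‖x‖ * ‖z‖)}

/-- The `k`-cumulative subspace coherence `ζ_k` of a collection of subspaces. -/
noncomputable def zeta {D n : ℕ} (S : Fin n → Submodule ℝ (EuclideanSpace ℝ (Fin D)))
    (k : ℕ) : ℝ :=
  sSup {r : ℝ | ∃ (Λ : Finset (Fin n)) (i : Fin n),
    Λ.card = k ∧ i ∉ Λ ∧ r = ∑ j ∈ Λ, subCoh (S i) (S j)}

/-- The mutual subspace coherence `μ_S` of a collection of subspaces. -/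
noncomputable def muS {D n : ℕ} (S : Fin n → Submodule ℝ (EuclideanSpace ℝ (Fin D))) : ℝ :=
  sSup {r : ℝ | ∃ i j : Fin n, i ≠ j ∧ r = subCoh (S i) (S j)}

/-- The `ℓ_q` norm of a finite vector: `(∑ |v i|^q)^{1/q}`. -/
noncomputable def lqnorm (q : ℝ) {ι : Type*} [Fintype ι] (v : ι → ℝ) : ℝ :=
  (∑ i, |v i| ^ q) ^ (1 / q)

/-- The `ℓ_q` norm of a vector of `R^D` (viewed as a Euclidean space element). -/
noncomputable def lqnormE (q : ℝ) {D : ℕ} (v : EuclideanSpace ℝ (Fin D)) : ℝ :=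
  lqnorm q ((WithLp.equiv 2 (Fin D → ℝ)) v)

lemma subCoh_nonneg {D : ℕ} (S T : Submodule ℝ (EuclideanSpace ℝ (Fin D))) :
    0 ≤ subCoh S T := by
  apply Real.sSup_nonneg
  rintro r ⟨x, hx, z, hz, hx0, hz0, rfl⟩
  positivity

lemma subCoh_comm {D : ℕ} (S T : Submodule ℝ (EuclideanSpace ℝ (Fin D))) :
    subCoh S T = subCoh T S := by
  unfold subCoh
  congr 1
  ext r
  constructor <;> rintro ⟨x, hx, z, hz, hx0, hz0, rfl⟩ <;>
    exact ⟨z, hz, x, hx, hz0, hx0, by rw [real_inner_comm, mul_comm]⟩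

lemma abs_inner_le_subCoh {D : ℕ} {S T : Submodule ℝ (EuclideanSpace ℝ (Fin D))}
    {u v : EuclideanSpace ℝ (Fin D)} (hu : u ∈ S) (hv : v ∈ T) :
    |(inner ℝ u v : ℝ)| ≤ subCoh S T * (‖u‖ * ‖v‖) := by
  rcases eq_or_ne u 0 with rfl | hu0
  · simp
  rcases eq_or_ne v 0 with rfl | hv0
  · simp
  have hnorm : (0:ℝ) < ‖u‖ * ‖v‖ := by
    have := norm_pos_iff.mpr hu0
    have := norm_pos_iff.mpr hv0
    positivity
  have hbdd : BddAbove {r : ℝ | ∃ x ∈ S, ∃ z ∈ T, x ≠ 0 ∧ z ≠ 0 ∧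
      r = |(inner ℝ x z : ℝ)| / (‖x‖ * ‖z‖)} := by
    refine ⟨1, ?_⟩
    rintro r ⟨x, hx, z, hz, hx0, hz0, rfl⟩
    have hx' : (0:ℝ) < ‖x‖ := norm_pos_iff.mpr hx0
    have hz' : (0:ℝ) < ‖z‖ := norm_pos_iff.mpr hz0
    rw [div_le_one (by positivity)]
    exact abs_real_inner_le_norm x z
  have hmem : |(inner ℝ u v : ℝ)| / (‖u‖ * ‖v‖) ∈ {r : ℝ | ∃ x ∈ S, ∃ z ∈ T, x ≠ 0 ∧ z ≠ 0 ∧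
      r = |(inner ℝ x z : ℝ)| / (‖x‖ * ‖z‖)} := ⟨u, hu, v, hv, hu0, hv0, rfl⟩
  have h := le_csSup hbdd hmem
  rw [div_le_iff₀ hnorm] at h
  exact h

lemma sum_subCoh_le_zeta {D n : ℕ} (S : Fin n → Submodule ℝ (EuclideanSpace ℝ (Fin D)))
    {Λ : Finset (Fin n)} {i : Fin n} (hi : i ∉ Λ) :
    ∑ j ∈ Λ, subCoh (S i) (S j) ≤ zeta S Λ.card := by
  apply le_csSup ?_ (show _ ∈ {r : ℝ | ∃ (Λ' : Finset (Fin n)) (i' : Fin n),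
      Λ'.card = Λ.card ∧ i' ∉ Λ' ∧ r = ∑ j ∈ Λ', subCoh (S i') (S j)} from ⟨Λ, i, rfl, hi, rfl⟩)
  have hsub : {r : ℝ | ∃ (Λ' : Finset (Fin n)) (i' : Fin n),
      Λ'.card = Λ.card ∧ i' ∉ Λ' ∧ r = ∑ j ∈ Λ', subCoh (S i') (S j)} ⊆
      (fun p : Finset (Fin n) × Fin n => ∑ j ∈ p.1, subCoh (S p.2) (S j)) '' Set.univ := by
    rintro r ⟨Λ', i', _, _, rfl⟩
    exact ⟨(Λ', i'), trivial, rfl⟩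
  exact ((Set.finite_univ.image _).subset hsub).bddAbove

lemma zeta_nonneg {D n : ℕ} (S : Fin n → Submodule ℝ (EuclideanSpace ℝ (Fin D))) (k : ℕ) :
    0 ≤ zeta S k := by
  apply Real.sSup_nonneg
  rintro r ⟨Λ, i, _, _, rfl⟩
  exact Finset.sum_nonneg fun j _ => subCoh_nonneg _ _

lemma lqnormE_nonneg (q : ℝ) {D : ℕ} (v : EuclideanSpace ℝ (Fin D)) :
    0 ≤ lqnormE q v := by
  unfold lqnormE lqnorm
  positivity

lemma sq_le_imp {x y : ℝ} (hx : 0 ≤ x) (hy : 0 ≤ y) (h : x^2 ≤ y^2) : x ≤ y := by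
  calc x = Real.sqrt (x^2) := (Real.sqrt_sq hx).symm
    _ ≤ Real.sqrt (y^2) := Real.sqrt_le_sqrt h
    _ = y := Real.sqrt_sq hy

lemma exists_rep {D n : ℕ} {m : Fin n → ℕ}
    {S : Fin n → Submodule ℝ (EuclideanSpace ℝ (Fin D))}
    (B : ∀ i : Fin n, (Fin (m i) → ℝ) →ₗ[ℝ] EuclideanSpace ℝ (Fin D))
    (hrange : ∀ i, LinearMap.range (B i) = S i)
    (T : Finset (Fin n)) (x : EuclideanSpace ℝ (Fin D))
    (hx : x ∈ ⨆ i ∈ T, S i) :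
    ∃ c : ∀ i : Fin n, Fin (m i) → ℝ, (∀ i ∉ T, c i = 0) ∧
      (∑ i ∈ T, B i (c i)) = x ∧ x = ∑ i, B i (c i) := by
  classical
  obtain ⟨μ, hμ⟩ := (Submodule.mem_iSup_finset_iff_exists_sum S x).mp hx
  have hchoice : ∀ i : Fin n, ∃ c : Fin (m i) → ℝ, B i c = (μ i : EuclideanSpace ℝ (Fin D)) := by
    intro i
    have h2 : (μ i : EuclideanSpace ℝ (Fin D)) ∈ LinearMap.range (B i) := by
      rw [hrange i]; exact (μ i).2
    exact h2
  choose ca hca using hchoice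
  refine ⟨fun i => if i ∈ T then ca i else 0, fun i hi => if_neg hi, ?_, ?_⟩
  · rw [← hμ]
    refine Finset.sum_congr rfl fun i hi => ?_
    simp only [if_pos hi, hca]
  · rw [← Finset.sum_subset (Finset.subset_univ T)
      (fun i _ hi => by simp only [if_neg hi, map_zero])]
    rw [← hμ]
    exact (Finset.sum_congr rfl fun i hi => by simp only [if_pos hi, hca]).symm

set_option maxHeartbeats 1000000 in
/-- Proposition 4: if `ζ_k + ζ_{k−1} < (1−ε'_q)/(1+ε'_q)`, then the
exchange condition for `P'_{ℓq/ℓ1}` holds: for every `k`-subset `Λ` and every nonzero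
`x ∈ (⊕_{i∈Λ}S_i) ∩ (⊕_{i∉Λ}S_i)`, the minimal value of `Σ_{i∈Λ}‖B[i]c[i]‖_q` over
representations of `x` on `Λ` is strictly smaller than the minimal value of
`Σ_{i∉Λ}‖B[i]c[i]‖_q` over representations of `x` outside `Λ`. -/
theorem prop4_cumulative_coherence_condition {D n k : ℕ} (q : ℝ) (hq : 1 ≤ q)
    (m : Fin n → ℕ)
    (S : Fin n → Submodule ℝ (EuclideanSpace ℝ (Fin D)))
    (B : ∀ i : Fin n, (Fin (m i) → ℝ) →ₗ[ℝ] EuclideanSpace ℝ (Fin D))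
    (hrange : ∀ i, LinearMap.range (B i) = S i)
    (hdisj : ∀ i j : Fin n, i ≠ j → S i ⊓ S j = ⊥)
    (ε' : ℝ) (hε0 : 0 ≤ ε') (hε1 : ε' < 1)
    (hEps : ∀ (i : Fin n) (c : Fin (m i) → ℝ),
      (1 - ε') * (lqnormE q (B i c)) ^ 2 ≤ ‖B i c‖ ^ 2 ∧
      ‖B i c‖ ^ 2 ≤ (1 + ε') * (lqnormE q (B i c)) ^ 2)
    -- the uniqueness rank condition
    (hrank : ∀ s : Fin n → EuclideanSpace ℝ (Fin D),
      (∀ i, s i ∈ S i ∧ 1 - ε' ≤ ‖s i‖ ^ 2 ∧ ‖s i‖ ^ 2 ≤ 1 + ε') →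
      2 * k ≤ (Matrix.of fun (a : Fin D) (i : Fin n) => s i a).rank)
    (hcond : zeta S k + zeta S (k - 1) < (1 - ε') / (1 + ε')) :
    ∀ (Λ : Finset (Fin n)) (x : EuclideanSpace ℝ (Fin D)),
      Λ.card = k → x ≠ 0 → x ∈ (⨆ i ∈ Λ, S i) → x ∈ (⨆ i ∈ Λᶜ, S i) →
      sInf {r : ℝ | ∃ c : ∀ i : Fin n, Fin (m i) → ℝ, (∀ i ∉ Λ, c i = 0) ∧
          x = ∑ i, B i (c i) ∧ r = ∑ i ∈ Λ, lqnormE q (B i (c i))} <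
      sInf {r : ℝ | ∃ c : ∀ i : Fin n, Fin (m i) → ℝ, (∀ i ∈ Λ, c i = 0) ∧
          x = ∑ i, B i (c i) ∧ r = ∑ i ∈ Λᶜ, lqnormE q (B i (c i))} := by
  intro Λ x hcard hx0 hxΛ hxΛc
  classical
  set ζk := zeta S k with hζk
  set ζk1 := zeta S (k - 1) with hζk1
  have hζk0 : 0 ≤ ζk := zeta_nonneg S k
  have hζk10 : 0 ≤ ζk1 := zeta_nonneg S (k - 1)
  have hm : (0:ℝ) < 1 - ε' := by linarith
  have hp : (0:ℝ) < 1 + ε' := by linarith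
  have hdiv1 : (1 - ε') / (1 + ε') ≤ 1 := by
    rw [div_le_one hp]; linarith
  have h1 : ζk1 < 1 := by linarith
  set sa := Real.sqrt (1 - ε') with hsadef
  set sb := Real.sqrt (1 + ε') with hsbdef
  have hsa : 0 < sa := Real.sqrt_pos.mpr hm
  have hsb : 0 < sb := Real.sqrt_pos.mpr hp
  have hsa2 : sa ^ 2 = 1 - ε' := Real.sq_sqrt hm.le
  have hsb2 : sb ^ 2 = 1 + ε' := Real.sq_sqrt hp.le
  have hsasb : sa ≤ sb := Real.sqrt_le_sqrt (by linarith)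
  have hcond2 : (ζk + ζk1) * (1 + ε') < 1 - ε' := by
    rw [← lt_div_iff₀ hp]; exact hcond
  have hkey : ζk * sb < (1 - ζk1) * sa := by
    have h2 : (ζk * sb) * sa < ((1 - ζk1) * sa) * sa := by
      nlinarith [mul_nonneg (mul_nonneg hζk0 hsb.le) (sub_nonneg.mpr hsasb),
        mul_nonneg hζk10 hε0, sq_nonneg sb]
    exact lt_of_mul_lt_mul_right h2 hsa.le
  have hd : 0 < (1 - ζk1) * sa := mul_pos (by linarith) hsa
  set ρ := ζk * sb / ((1 - ζk1) * sa) with hρdef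
  have hρ0 : 0 ≤ ρ := div_nonneg (mul_nonneg hζk0 hsb.le) hd.le
  have hρ1 : ρ < 1 := (div_lt_one hd).mpr hkey
  -- representation on Λ
  obtain ⟨c, hc0, hcsum, hcx⟩ := exists_rep B hrange Λ x hxΛ
  set a : Fin n → EuclideanSpace ℝ (Fin D) := fun i => B i (c i) with hadef
  have haS : ∀ i, a i ∈ S i := fun i => by rw [← hrange i]; exact ⟨c i, rfl⟩
  set V := ∑ i ∈ Λ, lqnormE q (B i (c i)) with hVdef
  have hV0 : 0 ≤ V := Finset.sum_nonneg fun i _ => lqnormE_nonneg q _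
  set A := ∑ i ∈ Λ, ‖a i‖ with hAdef
  have hsaV : sa * V ≤ A := by
    rw [hVdef, Finset.mul_sum]
    refine Finset.sum_le_sum fun i _ => ?_
    refine sq_le_imp (mul_nonneg hsa.le (lqnormE_nonneg q _)) (norm_nonneg _) ?_
    rw [mul_pow, hsa2]
    exact (hEps i (c i)).1
  set δ := ‖x‖ / sb with hδdef
  have hδpos : 0 < δ := div_pos (norm_pos_iff.mpr hx0) hsb
  -- lower bound for the RHS infimum
  have hRHS : ∀ r' ∈ {r : ℝ | ∃ c : ∀ i : Fin n, Fin (m i) → ℝ, (∀ i ∈ Λ, c i = 0) ∧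
      x = ∑ i, B i (c i) ∧ r = ∑ i ∈ Λᶜ, lqnormE q (B i (c i))},
      V + (1 - ρ) * δ ≤ r' := by
    rintro r' ⟨c', hc'0, hxb, rfl⟩
    set b : Fin n → EuclideanSpace ℝ (Fin D) := fun j => B j (c' j) with hbdef
    have hbS : ∀ j, b j ∈ S j := fun j => by rw [← hrange j]; exact ⟨c' j, rfl⟩
    have hxb' : ∑ j ∈ Λᶜ, b j = x := by
      rw [Finset.sum_subset (Finset.subset_univ Λᶜ)
        (fun i _ hi => by
          simp only [hbdef]
          rw [hc'0 i (by simpa using hi), map_zero])]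
      exact hxb.symm
    set W := ∑ j ∈ Λᶜ, lqnormE q (B j (c' j)) with hWdef
    set Bv := ∑ j ∈ Λᶜ, ‖b j‖ with hBvdef
    have hBvW : Bv ≤ sb * W := by
      rw [hWdef, hBvdef, Finset.mul_sum]
      refine Finset.sum_le_sum fun j _ => ?_
      refine sq_le_imp (norm_nonneg _) (mul_nonneg hsb.le (lqnormE_nonneg q _)) ?_
      rw [mul_pow, hsb2]
      exact (hEps j (c' j)).2
    have hxBv : ‖x‖ ≤ Bv := by
      rw [← hxb']
      exact norm_sum_le _ _
    have hWδ : δ ≤ W := by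
      rw [hδdef, div_le_iff₀ hsb]
      nlinarith
    -- main coherence estimate
    have hnormi : ∀ i ∈ Λ, ‖a i‖ ≤
        (∑ j ∈ Λᶜ, subCoh (S i) (S j) * ‖b j‖) +
        ∑ i' ∈ Λ.erase i, subCoh (S i) (S i') * ‖a i'‖ := by
      intro i hiΛ
      have hT0 : 0 ≤ (∑ j ∈ Λᶜ, subCoh (S i) (S j) * ‖b j‖) +
          ∑ i' ∈ Λ.erase i, subCoh (S i) (S i') * ‖a i'‖ :=
        add_nonneg
          (Finset.sum_nonneg fun j _ => mul_nonneg (subCoh_nonneg _ _) (norm_nonneg _))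
          (Finset.sum_nonneg fun j _ => mul_nonneg (subCoh_nonneg _ _) (norm_nonneg _))
      rcases eq_or_ne (a i) 0 with h0 | h0
      · rw [h0, norm_zero]; exact hT0
      have e1 : (inner ℝ (a i) x : ℝ) = ∑ j ∈ Λᶜ, (inner ℝ (a i) (b j) : ℝ) := by
        rw [← hxb', inner_sum]
      have e2 : (inner ℝ (a i) x : ℝ) = ‖a i‖ ^ 2 + ∑ i' ∈ Λ.erase i, (inner ℝ (a i) (a i') : ℝ) := by
        rw [← hcsum, inner_sum, ← Finset.add_sum_erase _ _ hiΛ, ← real_inner_self_eq_norm_sq]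
      have hsq : ‖a i‖ ^ 2 ≤ ‖a i‖ * ((∑ j ∈ Λᶜ, subCoh (S i) (S j) * ‖b j‖) +
          ∑ i' ∈ Λ.erase i, subCoh (S i) (S i') * ‖a i'‖) := by
        have hb1 : ∑ j ∈ Λᶜ, (inner ℝ (a i) (b j) : ℝ) ≤
            ∑ j ∈ Λᶜ, ‖a i‖ * (subCoh (S i) (S j) * ‖b j‖) := by
          refine Finset.sum_le_sum fun j _ => ?_
          refine (le_abs_self _).trans ((abs_inner_le_subCoh (haS i) (hbS j)).trans_eq ?_)
          ring
        have hb2 : ∑ i' ∈ Λ.erase i, (-(inner ℝ (a i) (a i') : ℝ)) ≤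
            ∑ i' ∈ Λ.erase i, ‖a i‖ * (subCoh (S i) (S i') * ‖a i'‖) := by
          refine Finset.sum_le_sum fun i' _ => ?_
          refine (neg_le_abs _).trans ?_
          refine (abs_inner_le_subCoh (haS i) (haS i')).trans_eq ?_
          ring
        rw [Finset.sum_neg_distrib] at hb2
        rw [mul_add, Finset.mul_sum, Finset.mul_sum]
        linarith [e1, e2]
      have hpos : 0 < ‖a i‖ := norm_pos_iff.mpr h0
      rw [sq] at hsq
      exact le_of_mul_le_mul_left hsq hpos
    have hA1 : A ≤ ζk * Bv + ζk1 * A := by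
      have hsum := Finset.sum_le_sum hnormi
      rw [Finset.sum_add_distrib] at hsum
      have hfirst : ∑ i ∈ Λ, ∑ j ∈ Λᶜ, subCoh (S i) (S j) * ‖b j‖ ≤ ζk * Bv := by
        rw [Finset.sum_comm, hBvdef, Finset.mul_sum]
        refine Finset.sum_le_sum fun j hj => ?_
        rw [← Finset.sum_mul]
        refine mul_le_mul_of_nonneg_right ?_ (norm_nonneg _)
        have hjΛ : j ∉ Λ := by simpa using hj
        calc ∑ i ∈ Λ, subCoh (S i) (S j) = ∑ i ∈ Λ, subCoh (S j) (S i) :=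
              Finset.sum_congr rfl fun i _ => subCoh_comm _ _
          _ ≤ zeta S Λ.card := sum_subCoh_le_zeta S hjΛ
          _ = ζk := by rw [hcard]
      have hsecond : ∑ i ∈ Λ, ∑ i' ∈ Λ.erase i, subCoh (S i) (S i') * ‖a i'‖ ≤ ζk1 * A := by
        have hswap := Finset.sum_comm' (s := Λ) (t := fun i => Λ.erase i)
          (s' := fun i' => Λ.erase i') (t' := Λ)
          (f := fun i i' => subCoh (S i) (S i') * ‖a i'‖)
          (fun i i' => by
            simp only [Finset.mem_erase]
            constructor
            · rintro ⟨h1, h2, h3⟩; exact ⟨⟨Ne.symm h2, h1⟩, h3⟩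
            · rintro ⟨⟨h1, h2⟩, h3⟩; exact ⟨h2, Ne.symm h1, h3⟩)
        rw [hswap]
        rw [hAdef, Finset.mul_sum]
        refine Finset.sum_le_sum fun i' hi' => ?_
        rw [← Finset.sum_mul]
        refine mul_le_mul_of_nonneg_right ?_ (norm_nonneg _)
        calc ∑ i ∈ Λ.erase i', subCoh (S i) (S i') = ∑ i ∈ Λ.erase i', subCoh (S i') (S i) :=
              Finset.sum_congr rfl fun i _ => subCoh_comm _ _
          _ ≤ zeta S (Λ.erase i').card := sum_subCoh_le_zeta S (Finset.notMem_erase i' Λ)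
          _ = ζk1 := by rw [Finset.card_erase_of_mem hi', hcard]
      calc A ≤ _ := hsum
        _ ≤ ζk * Bv + ζk1 * A := add_le_add hfirst hsecond
    -- combine
    have hVρW : V ≤ ρ * W := by
      rw [hρdef, div_mul_eq_mul_div, le_div_iff₀ hd]
      have s1 : sa * V * (1 - ζk1) ≤ A * (1 - ζk1) :=
        mul_le_mul_of_nonneg_right hsaV (by linarith)
      have s2 : ζk * Bv ≤ ζk * (sb * W) := mul_le_mul_of_nonneg_left hBvW hζk0
      nlinarith [hA1]
    nlinarith [mul_le_mul_of_nonneg_left hWδ (sub_nonneg.mpr hρ1.le)]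
  -- RHS set nonempty
  obtain ⟨c₂, hc₂0, _, hc₂x⟩ := exists_rep B hrange Λᶜ x hxΛc
  have hRHSne : {r : ℝ | ∃ c : ∀ i : Fin n, Fin (m i) → ℝ, (∀ i ∈ Λ, c i = 0) ∧
      x = ∑ i, B i (c i) ∧ r = ∑ i ∈ Λᶜ, lqnormE q (B i (c i))}.Nonempty :=
    ⟨_, c₂, fun i hi => hc₂0 i (by simpa using hi), hc₂x, rfl⟩
  have hup : V + (1 - ρ) * δ ≤ sInf {r : ℝ | ∃ c : ∀ i : Fin n, Fin (m i) → ℝ,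
      (∀ i ∈ Λ, c i = 0) ∧ x = ∑ i, B i (c i) ∧ r = ∑ i ∈ Λᶜ, lqnormE q (B i (c i))} :=
    le_csInf hRHSne hRHS
  have hlow : sInf {r : ℝ | ∃ c : ∀ i : Fin n, Fin (m i) → ℝ, (∀ i ∉ Λ, c i = 0) ∧
      x = ∑ i, B i (c i) ∧ r = ∑ i ∈ Λ, lqnormE q (B i (c i))} ≤ V := by
    refine csInf_le ⟨0, ?_⟩ ⟨c, hc0, hcx, rfl⟩
    rintro r ⟨c', _, _, rfl⟩
    exact Finset.sum_nonneg fun i _ => lqnormE_nonneg q _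
  have : 0 < (1 - ρ) * δ := mul_pos (by linarith) hδpos
  linarith
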